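/- Let X be a connected topological n-manifold, i.e., a nonempty connected Hausdorff topological space that is a charted space modelled on EuclideanSpace ℝ (Fin n). Then X is topologically homogeneous: for any two points p, q ∈ X there exists a homeomorphism h : X → X with h(p) = q. -/

import Mathlib

open Set Metric
open scoped NNReal

theorem MyProof.exists_homeomorph_eq_of_ball {E' : Type*} [NormedAddCommGroup E']
    [NormedSpace ℝ E'] [CompleteSpace E'] (c b : E') (r : ℝ) (hb : b ∈ Metric.ball c r) :
    ∃ F : E' ≃ₜ E', F c = b ∧ ∀ v, v ∉ Metric.ball c r → F v = v := by
  have hr : 0 < r := lt_of_le_of_lt dist_nonneg hb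
  have hbc : ‖b - c‖ < r := by rwa [Metric.mem_ball, dist_eq_norm] at hb
  set f : E' → E' := fun v => v + (max (1 - ‖v - c‖ / r) 0) • (b - c) with hf
  set K : ℝ≥0 := ‖b - c‖₊ / r.toNNReal with hK
  have hKr : (K : ℝ) = ‖b - c‖ / r := by
    simp [hK, NNReal.coe_div, Real.coe_toNNReal _ hr.le]
  have hK1 : K < 1 := by
    rw [← NNReal.coe_lt_coe, hKr, NNReal.coe_one, div_lt_one hr]; exact hbc
  have hid : ∀ u : E', ((ContinuousLinearEquiv.refl ℝ E' : E' ≃L[ℝ] E') : E' →L[ℝ] E') u = u :=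
    fun u => rfl
  have happrox : ApproximatesLinearOn f
      ((ContinuousLinearEquiv.refl ℝ E' : E' ≃L[ℝ] E') : E' →L[ℝ] E') Set.univ K := by
    intro v _ w _
    have h1 : f v - f w - ((ContinuousLinearEquiv.refl ℝ E' : E' ≃L[ℝ] E') : E' →L[ℝ] E') (v - w)
        = (max (1 - ‖v - c‖ / r) 0 - max (1 - ‖w - c‖ / r) 0) • (b - c) := by
      rw [hid, hf]
      simp only [sub_smul]
      abel
    rw [h1, norm_smul, Real.norm_eq_abs]
    have h2 : |max (1 - ‖v - c‖ / r) 0 - max (1 - ‖w - c‖ / r) 0| ≤ ‖v - w‖ / r := by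
      refine le_trans (abs_max_sub_max_le_abs _ _ _) ?_
      have heq : (1 - ‖v - c‖ / r) - (1 - ‖w - c‖ / r) = (‖w - c‖ - ‖v - c‖) / r := by ring
      rw [heq, abs_div, abs_of_pos hr]
      refine div_le_div_of_nonneg_right ?_ hr.le
      calc |‖w - c‖ - ‖v - c‖| ≤ ‖(w - c) - (v - c)‖ := abs_norm_sub_norm_le _ _
        _ = ‖v - w‖ := by rw [← norm_neg]; congr 1; abel
    calc |max (1 - ‖v - c‖ / r) 0 - max (1 - ‖w - c‖ / r) 0| * ‖b - c‖
        ≤ (‖v - w‖ / r) * ‖b - c‖ := mul_le_mul_of_nonneg_right h2 (norm_nonneg _)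
      _ = (K : ℝ) * ‖v - w‖ := by rw [hKr]; ring
  have hc : Subsingleton E' ∨ K < ‖(((ContinuousLinearEquiv.refl ℝ E').symm :
      E' ≃L[ℝ] E') : E' →L[ℝ] E')‖₊⁻¹ := by
    rcases subsingleton_or_nontrivial E' with h | h
    · exact Or.inl h
    · right
      simp only [ContinuousLinearEquiv.refl_symm, ContinuousLinearEquiv.coe_refl,
        ContinuousLinearMap.nnnorm_id, inv_one]
      exact hK1
  set F : E' ≃ₜ E' := ApproximatesLinearOn.toHomeomorph f happrox hc with hFdef
  have hFapp : ∀ v, F v = f v := fun v => rfl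
  refine ⟨F, ?_, ?_⟩
  · rw [hFapp]
    simp [hf]
  · intro v hv
    rw [hFapp]
    have hle : r ≤ ‖v - c‖ := by
      rw [Metric.mem_ball, dist_eq_norm, not_lt] at hv; exact hv
    have h0 : 1 - ‖v - c‖ / r ≤ 0 := by
      have := (div_le_div_iff_of_pos_right hr).mpr hle
      rw [div_self hr.ne'] at this
      linarith
    simp [hf, max_eq_right h0]

open Set Metric Topology
open scoped NNReal Classical

theorem MyProof.exists_glue_homeo {X : Type*} [TopologicalSpace X] [T2Space X]
    {E' : Type*} [NormedAddCommGroup E'] [NormedSpace ℝ E'] [ProperSpace E']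
    (e : OpenPartialHomeomorph X E') (c : E') (r : ℝ)
    (hsub : Metric.closedBall c r ⊆ e.target)
    (F : E' ≃ₜ E') (hF : ∀ v, v ∉ Metric.ball c r → F v = v) :
    ∃ h : X ≃ₜ X, ∀ z ∈ e.source, h z = e.symm (F (e z)) := by
  -- F.symm is also the identity outside the ball
  have hFsymm : ∀ v, v ∉ Metric.ball c r → F.symm v = v := by
    intro v hv
    have : F v = v := hF v hv
    calc F.symm v = F.symm (F v) := by rw [this]
      _ = v := F.symm_apply_apply v
  -- F and F.symm map e.target into itself
  have hmaps : ∀ (G : E' ≃ₜ E'), (∀ v, v ∉ Metric.ball c r → G v = v) →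
      ∀ v ∈ e.target, G v ∈ e.target := by
    intro G hG v hv
    by_cases hvb : G v ∈ Metric.ball c r
    · exact hsub (Metric.ball_subset_closedBall hvb)
    · have := hG (G v) hvb
      have hveq : G v = v := G.injective this
      rwa [hveq]
  have hmapF := hmaps F hF
  have hmapFs := hmaps F.symm hFsymm
  -- the glued maps
  set g : X → X := fun z => if z ∈ e.source then e.symm (F (e z)) else z with hg
  set g' : X → X := fun z => if z ∈ e.source then e.symm (F.symm (e z)) else z with hg'
  -- basic facts
  have hkey : ∀ (G : E' ≃ₜ E'), (∀ v ∈ e.target, G v ∈ e.target) → ∀ z ∈ e.source,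
      (fun z => if z ∈ e.source then e.symm (G (e z)) else z) z ∈ e.source ∧
      e ((fun z => if z ∈ e.source then e.symm (G (e z)) else z) z) = G (e z) := by
    intro G hG z hz
    simp only [if_pos hz]
    have h1 : G (e z) ∈ e.target := hG _ (e.map_source hz)
    exact ⟨e.map_target h1, e.right_inv h1⟩
  have hinv : ∀ z, g' (g z) = z := by
    intro z
    by_cases hz : z ∈ e.source
    · obtain ⟨h1, h2⟩ := hkey F hmapF z hz
      simp only [hg, hg'] at *
      rw [if_pos h1, h2, F.symm_apply_apply]
      exact e.left_inv hz
    · simp only [hg, hg', if_neg hz]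
  have hinv' : ∀ z, g (g' z) = z := by
    intro z
    by_cases hz : z ∈ e.source
    · obtain ⟨h1, h2⟩ := hkey F.symm hmapFs z hz
      simp only [hg, hg'] at *
      rw [if_pos h1, h2, F.apply_symm_apply]
      exact e.left_inv hz
    · simp only [hg, hg', if_neg hz]
  -- continuity
  have hcont : ∀ (G : E' ≃ₜ E'), (∀ v, v ∉ Metric.ball c r → G v = v) →
      (∀ v ∈ e.target, G v ∈ e.target) →
      Continuous (fun z => if z ∈ e.source then e.symm (G (e z)) else z) := by
    intro G hG hGt
    set u : X → X := fun z => if z ∈ e.source then e.symm (G (e z)) else z with hu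
    set S : Set X := e.symm '' Metric.closedBall c r with hS
    have hScpt : IsCompact S :=
      (isCompact_closedBall c r).image_of_continuousOn (e.continuousOn_symm.mono hsub)
    have hSsub : S ⊆ e.source := by
      rintro _ ⟨v, hv, rfl⟩
      exact e.map_target (hsub hv)
    have hid : ∀ z ∈ Sᶜ, u z = z := by
      intro z hzS
      by_cases hz : z ∈ e.source
      · have hez : e z ∉ Metric.closedBall c r := by
          intro hmem
          exact hzS ⟨e z, hmem, e.left_inv hz⟩
        have : G (e z) = e z := hG _ (fun hb => hez (Metric.ball_subset_closedBall hb))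
        simp only [hu, if_pos hz, this, e.left_inv hz]
      · simp only [hu, if_neg hz]
    have hco1 : ContinuousOn u e.source := by
      have : ContinuousOn (fun z => e.symm (G (e z))) e.source := by
        refine OpenPartialHomeomorph.continuousOn_symm e |>.comp
          (G.continuous.comp_continuousOn e.continuousOn) ?_
        intro z hz
        exact hGt _ (e.map_source hz)
      exact this.congr (fun z hz => by simp only [hu, if_pos hz])
    have hco2 : ContinuousOn u Sᶜ := continuousOn_id.congr hid
    rw [continuous_iff_continuousAt]
    intro z
    by_cases hz : z ∈ e.source
    · exact hco1.continuousAt (e.open_source.mem_nhds hz)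
    · refine hco2.continuousAt (IsOpen.mem_nhds hScpt.isClosed.isOpen_compl ?_)
      exact fun hzS => hz (hSsub hzS)
  refine ⟨⟨⟨g, g', hinv, hinv'⟩, hcont F hF hmapF, hcont F.symm hFsymm hmapFs⟩, ?_⟩
  intro z hz
  show (if z ∈ e.source then e.symm (F (e z)) else z) = e.symm (F (e z)); rw [if_pos hz]

theorem MyProof.local_homog {n : ℕ} {X : Type*} [TopologicalSpace X] [T2Space X]
    [ChartedSpace (EuclideanSpace ℝ (Fin n)) X] (x : X) :
    ∃ U : Set X, IsOpen U ∧ x ∈ U ∧ ∀ y ∈ U, ∃ h : X ≃ₜ X, h x = y := by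
  set e := chartAt (EuclideanSpace ℝ (Fin n)) x with he
  have hx : x ∈ e.source := mem_chart_source _ x
  have hc : e x ∈ e.target := e.map_source hx
  obtain ⟨r, hr, hball⟩ := Metric.isOpen_iff.mp e.open_target _ hc
  have hsub : Metric.closedBall (e x) (r/2) ⊆ e.target :=
    (Metric.closedBall_subset_ball (by linarith)).trans hball
  refine ⟨e.source ∩ e ⁻¹' Metric.ball (e x) (r/2), ?_,
    ⟨hx, Metric.mem_ball_self (by linarith)⟩, ?_⟩
  · exact e.continuousOn.isOpen_inter_preimage e.open_source Metric.isOpen_ball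
  · rintro y ⟨hy, hyb⟩
    obtain ⟨F, hFc, hFid⟩ := MyProof.exists_homeomorph_eq_of_ball (e x) (e y) (r/2) hyb
    obtain ⟨h, hh⟩ := MyProof.exists_glue_homeo e (e x) (r/2) hsub F hFid
    exact ⟨h, by rw [hh x hx, hFc, e.left_inv hy]⟩


/-- **Homogeneity of connected manifolds.** A nonempty connected Hausdorff topological
`n`-manifold (a charted space modelled on `EuclideanSpace ℝ (Fin n)`) is topologically
homogeneous: any point can be moved to any other point by a self-homeomorphism. -/
theorem connected_manifold_homogeneous
    (n : ℕ) (X : Type*) [TopologicalSpace X] [T2Space X]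
    [ChartedSpace (EuclideanSpace ℝ (Fin n)) X]
    [Nonempty X] [ConnectedSpace X]
    (p q : X) :
    ∃ h : X ≃ₜ X, h p = q := by
  set S := {y : X | ∃ h : X ≃ₜ X, h p = y} with hS
  have hmem : p ∈ S := ⟨Homeomorph.refl X, rfl⟩
  have hopen : IsOpen S := by
    rw [isOpen_iff_mem_nhds]
    intro y hy
    obtain ⟨h0, hh0⟩ := hy
    obtain ⟨U, hU, hyU, hloc⟩ := MyProof.local_homog (n := n) y
    refine Filter.mem_of_superset (hU.mem_nhds hyU) ?_
    intro z hz
    obtain ⟨h1, hh1⟩ := hloc z hz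
    exact ⟨h0.trans h1, by rw [Homeomorph.trans_apply, hh0, hh1]⟩
  have hclosed : IsClosed S := by
    rw [← isOpen_compl_iff, isOpen_iff_mem_nhds]
    intro y hy
    obtain ⟨U, hU, hyU, hloc⟩ := MyProof.local_homog (n := n) y
    refine Filter.mem_of_superset (hU.mem_nhds hyU) ?_
    intro z hz hzS
    obtain ⟨h1, hh1⟩ := hloc z hz
    obtain ⟨h2, hh2⟩ := hzS
    refine hy ⟨h2.trans h1.symm, ?_⟩
    rw [Homeomorph.trans_apply, hh2, ← hh1, Homeomorph.symm_apply_apply]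
  have huniv : S = Set.univ :=
    (isClopen_iff.mp ⟨hclosed, hopen⟩).resolve_left
      (Set.nonempty_iff_ne_empty.mp ⟨p, hmem⟩)
  have hq : q ∈ S := huniv ▸ Set.mem_univ q
  exact hq
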